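/- Let n, d ≥ 1 be integers, let α, β > 0 and γ ≠ 0, and let p, q, r satisfy 1 ≤ p ≤ 2 ≤ q ≤ ∞, 1 ≤ r ≤ 2(d+1)/(d+3), and not simultaneously d = 1, p = 2, q = 2. For μ > 0 with 1 < μ^{1/γ} ≤ 2 (so μ ≠ 1) and each integer k ≥ 0 let μ_k be the unique λ > 0 with 1 + ((2k+n)λ)^α + λ^{2β} = μ^{1/γ}. Set E = n(1/p − 1/q) + d(1/r − 1/r′), σ = φ(1/p − 1/2) + φ(1/2 − 1/q), D = E/α − 1, and C₀ = E/(2β) + (1/α − 1/(2β))(σ + 1) − 1. Then there is a constant C (depending on n, d, p, q, r, α, β, γ) such that for every such μ: Σ_{k=0}^{∞} |1−μ|^{−1} μ_k^{E} (2k+n)^{σ} ≤ C |1−μ|^{D} whenever |1−μ|^{1/α − 1/(2β)} ≤ 1, and Σ_{k=0}^{∞} |1−μ|^{−1} μ_k^{E} (2k+n)^{σ} ≤ C |1−μ|^{C₀} whenever |1−μ|^{1/α − 1/(2β)} > 1. -/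

import Mathlib

open scoped ENNReal

/-- The piecewise-linear exponent function `φ` of Koch–Ricci:
`φ(s) = −s/2` for `s ≤ s* = 1/(2n+1)` and `φ(s) = ns − 1/2` for `s ≥ s*`. -/
noncomputable def phiKR (n : ℕ) (s : ℝ) : ℝ :=
  if s ≤ 1 / (2 * n + 1) then -s / 2 else n * s - 1 / 2

open Real

set_option maxHeartbeats 1000000


lemma bern_aux {u s : ℝ} (hu : 0 ≤ u) (hs : 0 ≤ s) :
    1 + s * u / (1 + u) ≤ (1 + u) ^ s := by
  have h1u : (0:ℝ) < 1 + u := by linarith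
  have h := one_add_mul_self_le_rpow_one_add (s := u) (by linarith) (p := s + 1) (by linarith)
  rw [Real.rpow_add_one h1u.ne'] at h
  rw [← sub_nonneg]
  have expand : (1 + u) ^ s - (1 + s * u / (1 + u))
      = ((1 + u) ^ s * (1 + u) - (1 + (s + 1) * u)) / (1 + u) := by
    field_simp; ring
  rw [expand]
  have : (0:ℝ) ≤ (1 + u) ^ s * (1 + u) - (1 + (s + 1) * u) := by linarith
  positivity

-- head step : x ≥ 1, s > 0
lemma stepA {x s : ℝ} (hx : 1 ≤ x) (hs : 0 < s) :
    2 * s / 3 * x ^ (s - 1) ≤ (x + 2) ^ s - x ^ s := by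
  have hx0 : (0:ℝ) < x := by linarith
  have hu : (0:ℝ) ≤ 2 / x := by positivity
  have key := bern_aux hu hs.le
  have h2 : (x + 2) ^ s = x ^ s * (1 + 2 / x) ^ s := by
    rw [← Real.mul_rpow hx0.le (by positivity)]
    congr 1; field_simp
  have h3 : s * (2 / x) / (1 + 2 / x) = 2 * s / (x + 2) := by
    rw [div_eq_div_iff (by positivity) (by positivity)]; field_simp
  rw [h3] at key
  have hxs : (0:ℝ) < x ^ s := rpow_pos_of_pos hx0 s
  have h4 : x ^ s * (2 * s / (x + 2)) ≤ (x + 2) ^ s - x ^ s := by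
    rw [h2]
    nlinarith [mul_le_mul_of_nonneg_left key hxs.le]
  refine le_trans ?_ h4
  have h5 : x ^ (s - 1) = x ^ s / x := by
    rw [Real.rpow_sub hx0, Real.rpow_one]
  have e : 2 * s / 3 * x ^ (s - 1) = 2 * s * x ^ s / (3 * x) := by rw [h5]; ring
  have e2 : x ^ s * (2 * s / (x + 2)) = 2 * s * x ^ s / (x + 2) := by ring
  rw [e, e2]
  gcongr
  linarith

-- tail step : x ≥ 1, s > 0
lemma stepB {x s : ℝ} (hx : 1 ≤ x) (hs : 0 < s) :
    2 * s / 3 * 3 ^ (-s) * x ^ (-s - 1) ≤ x ^ (-s) - (x + 2) ^ (-s) := by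
  have hx0 : (0:ℝ) < x := by linarith
  have hx2 : (0:ℝ) < x + 2 := by linarith
  have hA := stepA hx hs
  have e1 : x ^ (-s) - (x + 2) ^ (-s) = ((x + 2) ^ s - x ^ s) / (x ^ s * (x + 2) ^ s) := by
    rw [Real.rpow_neg hx0.le, Real.rpow_neg hx2.le]
    field_simp [ (Real.rpow_pos_of_pos hx0 s).ne', (Real.rpow_pos_of_pos hx2 s).ne']
  rw [e1]
  have h32 : (x + 2) ^ s ≤ (3 * x) ^ s :=
    Real.rpow_le_rpow hx2.le (by linarith) hs.le
  have h3x : (3 * x) ^ s = 3 ^ s * x ^ s := Real.mul_rpow (by norm_num) hx0.le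
  have hxs : (0:ℝ) < x ^ s := rpow_pos_of_pos hx0 s
  have hx2s : (0:ℝ) < (x + 2) ^ s := rpow_pos_of_pos hx2 s
  have h3s : (0:ℝ) < (3:ℝ) ^ s := rpow_pos_of_pos (by norm_num) s
  rw [le_div_iff₀ (by positivity)]
  refine le_trans ?_ hA
  have e2 : x ^ (-s - 1) = x ^ (s - 1) / (x ^ s * x ^ s) := by
    rw [eq_div_iff (by positivity), ← Real.rpow_add hx0, ← Real.rpow_add hx0]
    ring_nf
  have e3 : (3:ℝ) ^ (-s) = 1 / 3 ^ s := by
    rw [Real.rpow_neg (by norm_num), one_div]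
  rw [e2, e3]
  calc 2 * s / 3 * (1 / 3 ^ s) * (x ^ (s - 1) / (x ^ s * x ^ s)) * (x ^ s * (x + 2) ^ s)
      = 2 * s / 3 * x ^ (s - 1) * ((x + 2) ^ s / (3 ^ s * x ^ s)) := by
        field_simp
    _ ≤ 2 * s / 3 * x ^ (s - 1) * 1 := by
        have : (x + 2) ^ s / (3 ^ s * x ^ s) ≤ 1 := by
          rw [div_le_one (by positivity), ← h3x]; exact h32
        have hnn : (0:ℝ) ≤ 2 * s / 3 * x ^ (s - 1) := by positivity
        exact mul_le_mul_of_nonneg_left this hnn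
    _ = 2 * s / 3 * x ^ (s - 1) := by ring

lemma headSum (n : ℕ) (hn : 1 ≤ n) {s : ℝ} (hs : 0 < s) (K : ℕ) :
    ∑ k ∈ Finset.range K, (2 * (k : ℝ) + n) ^ (s - 1) ≤ 3 / (2 * s) * (2 * (K : ℝ) + n) ^ s := by
  have hn1 : (1:ℝ) ≤ n := by exact_mod_cast hn
  induction K with
  | zero => simp; positivity
  | succ K ih =>
      rw [Finset.sum_range_succ]
      have hx : (1:ℝ) ≤ 2 * (K:ℝ) + n := by
        have : (0:ℝ) ≤ (K:ℝ) := Nat.cast_nonneg K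
        linarith
      have h := stepA hx hs
      have hc : (0:ℝ) < 3/(2*s) := by positivity
      have h2' := mul_le_mul_of_nonneg_left h hc.le
      have e1 : 3/(2*s) * (2*s/3 * (2 * (K:ℝ) + n) ^ (s-1)) = (2 * (K:ℝ) + n) ^ (s-1) := by
        field_simp
      rw [e1] at h2'
      have h2 := h2'
      have e2 : 2 * ((K:ℝ)+1) + n = 2*(K:ℝ)+n+2 := by ring
      push_cast
      rw [e2]
      linarith

lemma tailSumRange (n : ℕ) (hn : 1 ≤ n) {s : ℝ} (hs : 0 < s) (K m : ℕ) :
    ∑ i ∈ Finset.range m, (2 * ((i + K : ℕ) : ℝ) + n) ^ (-s - 1) ≤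
      3 / (2 * s) * 3 ^ s * ((2 * (K : ℝ) + n) ^ (-s) - (2 * ((K + m : ℕ) : ℝ) + n) ^ (-s)) := by
  have hn1 : (1:ℝ) ≤ n := by exact_mod_cast hn
  induction m with
  | zero => simp
  | succ m ih =>
      rw [Finset.sum_range_succ]
      have hx : (1:ℝ) ≤ 2 * ((m + K : ℕ):ℝ) + n := by
        have : (0:ℝ) ≤ ((m + K : ℕ):ℝ) := Nat.cast_nonneg _
        linarith
      have h := stepB hx hs
      have hc : (0:ℝ) < 3/(2*s) * 3 ^ s := by positivity
      have h2' := mul_le_mul_of_nonneg_left h hc.le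
      have e1 : 3/(2*s) * 3 ^ s * (2 * s / 3 * 3 ^ (-s) * (2 * ((m + K : ℕ):ℝ) + n) ^ (-s - 1))
          = (2 * ((m + K : ℕ):ℝ) + n) ^ (-s - 1) := by
        have e3 : (3:ℝ) ^ s * 3 ^ (-s) = 1 := by
          rw [← Real.rpow_add (by norm_num)]; simp
        have e5 : 3/(2*s)*(2*s/3) = (1:ℝ) := by field_simp
        calc 3/(2*s) * 3 ^ s * (2 * s / 3 * 3 ^ (-s) * (2 * ((m + K : ℕ):ℝ) + n) ^ (-s - 1))
            = ((3:ℝ) ^ s * 3 ^ (-s)) * (3/(2*s)*(2*s/3)) * (2 * ((m + K : ℕ):ℝ) + n) ^ (-s - 1) := by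
              ring
          _ = (2 * ((m + K : ℕ):ℝ) + n) ^ (-s - 1) := by rw [e3, e5]; ring
      rw [e1] at h2'
      have e2 : 2 * ((K + (m+1) : ℕ):ℝ) + n = 2 * ((m + K : ℕ):ℝ) + n + 2 := by push_cast; ring
      rw [e2]
      have e4 : 2 * ((K + m : ℕ):ℝ) + n = 2 * ((m + K : ℕ):ℝ) + n := by push_cast; ring
      rw [e4] at ih
      linarith

lemma tailSummable (n : ℕ) (hn : 1 ≤ n) {s : ℝ} (hs : 0 < s) :
    Summable (fun k : ℕ => (2 * (k : ℝ) + n) ^ (-s - 1)) := by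
  have hn1 : (1:ℝ) ≤ n := by exact_mod_cast hn
  have base : Summable (fun k : ℕ => ((k : ℝ) + 1) ^ (-s - 1)) := by
    have := (summable_nat_add_iff (f := fun k : ℕ => ((k : ℝ)) ^ (-s - 1)) 1).2
      (Real.summable_nat_rpow.2 (by linarith))
    simpa [Nat.cast_add] using this
  refine Summable.of_nonneg_of_le (fun k => ?_) (fun k => ?_) base
  · positivity
  · apply Real.rpow_le_rpow_of_nonpos (by positivity) (by push_cast; linarith [Nat.cast_nonneg (α := ℝ) k]) (by linarith)

lemma tailTsum (n : ℕ) (hn : 1 ≤ n) {s : ℝ} (hs : 0 < s) (K : ℕ) :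
    ∑' i : ℕ, (2 * ((i + K : ℕ) : ℝ) + n) ^ (-s - 1) ≤
      3 / (2 * s) * 3 ^ s * (2 * (K : ℝ) + n) ^ (-s) := by
  have hn1 : (1:ℝ) ≤ n := by exact_mod_cast hn
  apply Real.tsum_le_of_sum_range_le (fun i => by positivity)
  intro m
  refine le_trans (tailSumRange n hn hs K m) ?_
  have h1 : (0:ℝ) ≤ (2 * ((K + m : ℕ):ℝ) + n) ^ (-s) := by positivity
  have hc : (0:ℝ) ≤ 3/(2*s) * 3 ^ s := by positivity
  nlinarith

lemma phiKR_ge (n : ℕ) (hn : 1 ≤ n) {s : ℝ} (hs : 0 ≤ s) : -(1:ℝ)/6 ≤ phiKR n s := by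
  have hn1 : (1:ℝ) ≤ n := by exact_mod_cast hn
  unfold phiKR; split_ifs with h
  · have h2 : s ≤ 1/3 := le_trans h (by rw [div_le_div_iff₀ (by linarith) (by norm_num)]; linarith)
    linarith
  · push_neg at h
    have h3 : (1:ℝ)/(2*n+1) ≤ s := h.le
    have key : (1:ℝ)/3 ≤ (n:ℝ)*(1/(2*(n:ℝ)+1)) := by
      rw [mul_one_div, le_div_iff₀ (by linarith)]; linarith
    have h4 : (n:ℝ)*(1/(2*(n:ℝ)+1)) ≤ (n:ℝ)*s := by
      apply mul_le_mul_of_nonneg_left h3 (by linarith)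
    linarith

lemma phiKR_le (n : ℕ) {s : ℝ} (hs : 0 ≤ s) : phiKR n s ≤ (n:ℝ)*s := by
  have : (0:ℝ) ≤ (n:ℝ)*s := by positivity
  unfold phiKR; split_ifs with h <;> linarith

lemma phiKR_lt (n : ℕ) {s : ℝ} (hs : 0 < s) : phiKR n s < (n:ℝ)*s := by
  have : (0:ℝ) ≤ (n:ℝ)*s := by positivity
  unfold phiKR; split_ifs with h <;> linarith

-- ε ≤ c δ
lemma eps_le (γ : ℝ) (hγ : γ ≠ 0) (μ : ℝ) (hμ : 0 < μ) (h1 : 1 < μ ^ (1/γ))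
    (h2 : μ ^ (1/γ) ≤ 2) :
    μ ^ (1/γ) - 1 ≤ (2 * 2 ^ |γ| / |γ|) * |1 - μ| := by
  set ν := μ ^ (1/γ) with hν
  have hμν : μ = ν ^ γ := by
    rw [hν, ← Real.rpow_mul hμ.le, one_div, inv_mul_cancel₀ hγ, Real.rpow_one]
  set ε := ν - 1 with hε
  have hε0 : 0 < ε := by simp [hε]; linarith
  have hε1 : ε ≤ 1 := by simp [hε]; linarith
  have hg0 : 0 < |γ| := abs_pos.2 hγ
  -- Bernoulli: ν ^ |γ| - 1 ≥ |γ| ε / 2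
  have hbern : 1 + |γ| * ε / 2 ≤ ν ^ |γ| := by
    have h := bern_aux hε0.le hg0.le
    have e : (1:ℝ) + ε = ν := by rw [hε]; ring
    rw [e] at h
    have h3 : |γ| * ε / ν ≥ |γ| * ε / 2 := by
      apply div_le_div_of_nonneg_left (by positivity) (by linarith) (by linarith)
    calc 1 + |γ| * ε / 2 ≤ 1 + |γ| * ε / ν := by linarith
      _ ≤ ν ^ |γ| := h
  have h2g : (2:ℝ)^|γ| ≥ 1 := Real.one_le_rpow (by norm_num) hg0.le
  rcases lt_or_gt_of_ne hγ with hneg | hpos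
  · -- γ < 0
    have hg : |γ| = -γ := abs_of_neg hneg
    have hνg : ν ^ γ = (ν ^ |γ|)⁻¹ := by
      rw [hg, Real.rpow_neg (by linarith), inv_inv]
    have hν1 : (1:ℝ) < ν ^ |γ| := by linarith [mul_pos (mul_pos hg0 hε0) (by norm_num : (0:ℝ) < 1/2)]
    have hμlt : μ < 1 := by
      rw [hμν, hνg]
      rw [inv_lt_one_iff₀]; right; exact hν1
    have habs : |1 - μ| = 1 - μ := abs_of_pos (by linarith)
    have hνg2 : ν ^ |γ| ≤ 2 ^ |γ| := Real.rpow_le_rpow (by linarith) h2 hg0.le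
    have hδ : 1 - μ = (ν ^ |γ| - 1) / ν ^ |γ| := by
      rw [hμν, hνg]
      field_simp
    rw [habs, hδ]
    have hb2 : (ν ^ |γ| - 1) / ν ^ |γ| ≥ (|γ| * ε / 2) / 2 ^ |γ| := by
      apply div_le_div₀ (by linarith) (by linarith) (by linarith) hνg2
    calc ε = (2 * 2 ^ |γ| / |γ|) * ((|γ| * ε / 2) / 2 ^ |γ|) := by
          field_simp
      _ ≤ (2 * 2 ^ |γ| / |γ|) * ((ν ^ |γ| - 1) / ν ^ |γ|) := by
          apply mul_le_mul_of_nonneg_left hb2 (by positivity)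
  · -- γ > 0
    have hg : |γ| = γ := abs_of_pos hpos
    have hν0 : (0:ℝ) < ν := by linarith
    have hμ1 : 1 < μ := by
      rw [hμν]
      exact (Real.one_lt_rpow_iff_of_pos hν0).2 (Or.inl ⟨h1, hpos⟩)
    have habs : |1 - μ| = μ - 1 := by rw [abs_of_nonpos (by linarith)]; ring
    have hb : |γ| * ε / 2 ≤ μ - 1 := by
      rw [hμν, show ν ^ γ = ν ^ |γ| from by rw [hg]]; linarith
    rw [habs]
    calc ε = (2 / |γ|) * (|γ| * ε / 2) := by field_simp
      _ ≤ (2 / |γ|) * (μ - 1) := mul_le_mul_of_nonneg_left hb (by positivity)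
      _ ≤ (2 * 2 ^ |γ| / |γ|) * (μ - 1) := by
          apply mul_le_mul_of_nonneg_right _ (by linarith)
          rw [div_le_div_iff₀ hg0 hg0]
          nlinarith



lemma master (n : ℕ) (hn : 1 ≤ n) (α β γ : ℝ) (hα : 0 < α) (hβ : 0 < β) (hγ : γ ≠ 0)
    (E σ : ℝ) (hσ : -(1:ℝ)/3 ≤ σ) (hES : σ + 1 < E) :
    ∃ C : ℝ, ∀ μ : ℝ, 0 < μ → 1 < μ ^ (1 / γ) → μ ^ (1 / γ) ≤ 2 → ∀ muk : ℕ → ℝ,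
      (∀ k : ℕ, 0 < muk k ∧
        1 + ((2 * (k : ℝ) + n) * muk k) ^ α + (muk k) ^ (2 * β) = μ ^ (1 / γ)) →
      ((|1 - μ| ^ (1 / α - 1 / (2 * β)) ≤ 1 →
          ∑' k : ℕ, |1 - μ|⁻¹ * (muk k) ^ E * (2 * (k : ℝ) + n) ^ σ ≤
            C * |1 - μ| ^ (E / α - 1)) ∧
       (1 < |1 - μ| ^ (1 / α - 1 / (2 * β)) →
          ∑' k : ℕ, |1 - μ|⁻¹ * (muk k) ^ E * (2 * (k : ℝ) + n) ^ σ ≤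
            C * |1 - μ| ^ (E / (2 * β) + (1 / α - 1 / (2 * β)) * (σ + 1) - 1))) := by
  have hn1 : (1:ℝ) ≤ n := by exact_mod_cast hn
  have hs : 0 < E - σ - 1 := by linarith
  set s : ℝ := E - σ - 1 with hsdef
  have hsp : 0 < σ + 1 := by linarith
  have hE : 0 < E := by linarith
  have hg0 : (0:ℝ) < |γ| := abs_pos.2 hγ
  have h2g : (0:ℝ) < (2:ℝ) ^ |γ| := Real.rpow_pos_of_pos (by norm_num) _
  set c : ℝ := 2 * 2 ^ |γ| / |γ| with hcdef
  have hc : 0 < c := by positivity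
  set C1 : ℝ := c ^ (E/α) * (3/(2*s)*3^s*(n:ℝ)^(-s)) with hC1def
  set C2a : ℝ := c ^ (E/(2*β)) * (3/(2*(σ+1))) * ((n:ℝ)+4)^(σ+1) with hC2adef
  set C2b : ℝ := c ^ (E/α) * (3/(2*s)*3^s) with hC2bdef
  have hC1 : 0 ≤ C1 := by positivity
  have hC2a : 0 ≤ C2a := by positivity
  have hC2b : 0 ≤ C2b := by positivity
  refine ⟨C1 + (C2a + C2b), ?_⟩
  intro μ hμ h1 h2 muk hmuk
  have hμne : μ ≠ 1 := by
    intro h; rw [h, Real.one_rpow] at h1; exact lt_irrefl 1 h1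
  have hδ : 0 < |1 - μ| := abs_pos.2 (by intro h; exact hμne (by linarith))
  set δ : ℝ := |1 - μ| with hδdef
  have hεδ : μ ^ (1/γ) - 1 ≤ c * δ := eps_le γ hγ μ hμ h1 h2
  have hcδ : 0 < c * δ := mul_pos hc hδ
  have hXpos : ∀ k : ℕ, (0:ℝ) < 2 * (k:ℝ) + n := fun k => by
    have := Nat.cast_nonneg (α := ℝ) k; linarith
  -- bounds on muk
  have hmb1 : ∀ k : ℕ, muk k ≤ (c*δ) ^ α⁻¹ / (2*(k:ℝ)+n) := by
    intro k
    obtain ⟨hpos, heq⟩ := hmuk k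
    have hB0 : 0 ≤ (muk k) ^ (2*β) := Real.rpow_nonneg hpos.le _
    have hA : ((2*(k:ℝ)+n) * muk k) ^ α ≤ c * δ := by linarith
    have base0 : 0 ≤ (2*(k:ℝ)+n) * muk k := mul_nonneg (hXpos k).le hpos.le
    have h := Real.rpow_le_rpow (Real.rpow_nonneg base0 α) hA (inv_nonneg.2 hα.le)
    rw [← Real.rpow_mul base0, mul_inv_cancel₀ hα.ne', Real.rpow_one] at h
    rw [le_div_iff₀ (hXpos k), mul_comm]
    exact h
  have hmb2 : ∀ k : ℕ, muk k ≤ (c*δ) ^ (2*β)⁻¹ := by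
    intro k
    obtain ⟨hpos, heq⟩ := hmuk k
    have hA0 : 0 ≤ ((2*(k:ℝ)+n) * muk k) ^ α :=
      Real.rpow_nonneg (mul_nonneg (hXpos k).le hpos.le) _
    have hB : (muk k) ^ (2*β) ≤ c * δ := by linarith
    have h := Real.rpow_le_rpow (Real.rpow_nonneg hpos.le _) hB
      (by positivity : (0:ℝ) ≤ (2*β)⁻¹)
    rwa [← Real.rpow_mul hpos.le, mul_inv_cancel₀ (by positivity), Real.rpow_one] at h
  -- term bounds
  have hle1 : ∀ k : ℕ, δ⁻¹ * (muk k) ^ E * (2*(k:ℝ)+n) ^ σ ≤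
      δ⁻¹ * (c*δ) ^ (E/α) * (2*(k:ℝ)+n) ^ (-s-1) := by
    intro k
    have hpos := (hmuk k).1
    have h1' : (muk k) ^ E ≤ ((c*δ) ^ α⁻¹ / (2*(k:ℝ)+n)) ^ E :=
      Real.rpow_le_rpow hpos.le (hmb1 k) hE.le
    have h2' : ((c*δ) ^ α⁻¹ / (2*(k:ℝ)+n)) ^ E = (c*δ) ^ (E/α) * (2*(k:ℝ)+n) ^ (-E) := by
      rw [Real.div_rpow (Real.rpow_nonneg hcδ.le _) (hXpos k).le,
        ← Real.rpow_mul hcδ.le, inv_mul_eq_div, Real.rpow_neg (hXpos k).le, div_eq_mul_inv]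
    calc δ⁻¹ * (muk k) ^ E * (2*(k:ℝ)+n) ^ σ
        ≤ δ⁻¹ * ((c*δ) ^ (E/α) * (2*(k:ℝ)+n) ^ (-E)) * (2*(k:ℝ)+n) ^ σ := by
          have hXσ : (0:ℝ) ≤ (2*(k:ℝ)+n) ^ σ := Real.rpow_nonneg (hXpos k).le _
          apply mul_le_mul_of_nonneg_right _ hXσ
          apply mul_le_mul_of_nonneg_left _ (inv_nonneg.2 hδ.le)
          exact h1'.trans_eq h2'
      _ = δ⁻¹ * (c*δ) ^ (E/α) * (2*(k:ℝ)+n) ^ (-s-1) := by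
          rw [show (-s-1 : ℝ) = -E + σ from by rw [hsdef]; ring,
            Real.rpow_add (hXpos k)]
          ring
  have hle2 : ∀ k : ℕ, δ⁻¹ * (muk k) ^ E * (2*(k:ℝ)+n) ^ σ ≤
      δ⁻¹ * (c*δ) ^ (E/(2*β)) * (2*(k:ℝ)+n) ^ σ := by
    intro k
    have hpos := (hmuk k).1
    have h1' : (muk k) ^ E ≤ ((c*δ) ^ (2*β)⁻¹) ^ E :=
      Real.rpow_le_rpow hpos.le (hmb2 k) hE.le
    have h2' : ((c*δ) ^ (2*β)⁻¹) ^ E = (c*δ) ^ (E/(2*β)) := by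
      rw [← Real.rpow_mul hcδ.le, inv_mul_eq_div]
    have hXσ : (0:ℝ) ≤ (2*(k:ℝ)+n) ^ σ := Real.rpow_nonneg (hXpos k).le _
    apply mul_le_mul_of_nonneg_right _ hXσ
    apply mul_le_mul_of_nonneg_left _ (inv_nonneg.2 hδ.le)
    exact h1'.trans_eq h2'
  have ht0 : ∀ k : ℕ, 0 ≤ δ⁻¹ * (muk k) ^ E * (2*(k:ℝ)+n) ^ σ := by
    intro k
    have hpos := (hmuk k).1
    have := hXpos k
    positivity
  have hgsum : Summable (fun k : ℕ => δ⁻¹ * (c*δ) ^ (E/α) * (2*(k:ℝ)+n) ^ (-s-1)) :=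
    (tailSummable n hn hs).mul_left _
  have hts : Summable (fun k : ℕ => δ⁻¹ * (muk k) ^ E * (2*(k:ℝ)+n) ^ σ) :=
    Summable.of_nonneg_of_le ht0 hle1 hgsum
  have hpowinv : ∀ a : ℝ, δ⁻¹ * δ ^ a = δ ^ (a-1) := by
    intro a
    rw [Real.rpow_sub hδ, Real.rpow_one, inv_mul_eq_div]
  constructor
  · -- Case 1
    intro _
    calc ∑' k : ℕ, δ⁻¹ * (muk k) ^ E * (2*(k:ℝ)+n) ^ σ
        ≤ ∑' k : ℕ, δ⁻¹ * (c*δ) ^ (E/α) * (2*(k:ℝ)+n) ^ (-s-1) :=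
          Summable.tsum_le_tsum hle1 hts hgsum
      _ = δ⁻¹ * (c*δ) ^ (E/α) * ∑' k : ℕ, (2*(k:ℝ)+n) ^ (-s-1) := tsum_mul_left
      _ ≤ δ⁻¹ * (c*δ) ^ (E/α) * (3/(2*s)*3^s*(n:ℝ)^(-s)) := by
          apply mul_le_mul_of_nonneg_left _ (by positivity)
          have h0 := tailTsum n hn hs 0
          simpa using h0
      _ = C1 * δ ^ (E/α - 1) := by
          rw [Real.mul_rpow hc.le hδ.le, hC1def,
            show δ⁻¹ * (c ^ (E/α) * δ ^ (E/α)) * (3/(2*s)*3^s*(n:ℝ)^(-s))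
              = c ^ (E/α) * (3/(2*s)*3^s*(n:ℝ)^(-s)) * (δ⁻¹ * δ ^ (E/α)) from by ring,
            hpowinv]
      _ ≤ (C1 + (C2a + C2b)) * δ ^ (E/α - 1) := by
          apply mul_le_mul_of_nonneg_right (by linarith) (Real.rpow_nonneg hδ.le _)
  · -- Case 2
    intro hM
    set M : ℝ := δ ^ (1/α - 1/(2*β)) with hMdef
    have hM0 : 0 < M := Real.rpow_pos_of_pos hδ _
    set K : ℕ := ⌈M⌉₊ with hKdef
    have hMK : M ≤ (K:ℝ) := Nat.le_ceil M
    have hKM : (K:ℝ) < M + 1 := Nat.ceil_lt_add_one hM0.le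
    have hK0 : (0:ℝ) ≤ (K:ℝ) := Nat.cast_nonneg K
    have hXK_le : 2*(K:ℝ)+n ≤ ((n:ℝ)+4)*M := by nlinarith
    have hXK_ge : M ≤ 2*(K:ℝ)+n := by linarith
    have hshift : Summable (fun i : ℕ => δ⁻¹ * (muk (i+K)) ^ E * (2*((i+K:ℕ):ℝ)+n) ^ σ) :=
      (summable_nat_add_iff K).2 hts
    have hgshift : Summable (fun i : ℕ => δ⁻¹ * (c*δ) ^ (E/α) * (2*((i+K:ℕ):ℝ)+n) ^ (-s-1)) :=
      (summable_nat_add_iff K).2 hgsum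
    rw [← Summable.sum_add_tsum_nat_add K hts]
    have hhead : ∑ i ∈ Finset.range K, δ⁻¹ * (muk i) ^ E * (2*(i:ℝ)+n) ^ σ ≤
        C2a * δ ^ (E / (2*β) + (1/α - 1/(2*β)) * (σ + 1) - 1) := by
      calc ∑ i ∈ Finset.range K, δ⁻¹ * (muk i) ^ E * (2*(i:ℝ)+n) ^ σ
          ≤ ∑ i ∈ Finset.range K, δ⁻¹ * (c*δ) ^ (E/(2*β)) * (2*(i:ℝ)+n) ^ σ :=
            Finset.sum_le_sum (fun i _ => hle2 i)
        _ = δ⁻¹ * (c*δ) ^ (E/(2*β)) * ∑ i ∈ Finset.range K, (2*(i:ℝ)+n) ^ σ := by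
            rw [← Finset.mul_sum]
        _ ≤ δ⁻¹ * (c*δ) ^ (E/(2*β)) * (3/(2*(σ+1)) * (2*(K:ℝ)+n) ^ (σ+1)) := by
            apply mul_le_mul_of_nonneg_left _ (by positivity)
            have h0 := headSum n hn hsp K
            simpa [show σ+1-1 = σ from by ring] using h0
        _ ≤ δ⁻¹ * (c*δ) ^ (E/(2*β)) * (3/(2*(σ+1)) * (((n:ℝ)+4)*M) ^ (σ+1)) := by
            apply mul_le_mul_of_nonneg_left _ (by positivity)
            apply mul_le_mul_of_nonneg_left _ (by positivity)
            exact Real.rpow_le_rpow (by linarith [hXpos K]) hXK_le hsp.le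
        _ = C2a * δ ^ (E / (2*β) + (1/α - 1/(2*β)) * (σ + 1) - 1) := by
            rw [Real.mul_rpow (by linarith) hM0.le, Real.mul_rpow hc.le hδ.le, hMdef,
              ← Real.rpow_mul hδ.le,
              show δ⁻¹ * (c ^ (E/(2*β)) * δ ^ (E/(2*β))) *
                  (3/(2*(σ+1)) * (((n:ℝ)+4) ^ (σ+1) * δ ^ ((1/α - 1/(2*β)) * (σ+1))))
                = (c ^ (E/(2*β)) * (3/(2*(σ+1))) * ((n:ℝ)+4) ^ (σ+1)) *
                  (δ⁻¹ * (δ ^ (E/(2*β)) * δ ^ ((1/α - 1/(2*β)) * (σ+1)))) from by ring,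
              ← Real.rpow_add hδ, hpowinv, hC2adef]
    have htail : ∑' i : ℕ, δ⁻¹ * (muk (i+K)) ^ E * (2*((i+K:ℕ):ℝ)+n) ^ σ ≤
        C2b * δ ^ (E / (2*β) + (1/α - 1/(2*β)) * (σ + 1) - 1) := by
      calc ∑' i : ℕ, δ⁻¹ * (muk (i+K)) ^ E * (2*((i+K:ℕ):ℝ)+n) ^ σ
          ≤ ∑' i : ℕ, δ⁻¹ * (c*δ) ^ (E/α) * (2*((i+K:ℕ):ℝ)+n) ^ (-s-1) :=
            Summable.tsum_le_tsum (fun i => hle1 (i+K)) hshift hgshift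
        _ = δ⁻¹ * (c*δ) ^ (E/α) * ∑' i : ℕ, (2*((i+K:ℕ):ℝ)+n) ^ (-s-1) := tsum_mul_left
        _ ≤ δ⁻¹ * (c*δ) ^ (E/α) * (3/(2*s)*3^s * (2*(K:ℝ)+n) ^ (-s)) := by
            apply mul_le_mul_of_nonneg_left _ (by positivity)
            exact tailTsum n hn hs K
        _ ≤ δ⁻¹ * (c*δ) ^ (E/α) * (3/(2*s)*3^s * M ^ (-s)) := by
            apply mul_le_mul_of_nonneg_left _ (by positivity)
            apply mul_le_mul_of_nonneg_left _ (by positivity)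
            exact Real.rpow_le_rpow_of_nonpos hM0 hXK_ge (by linarith)
        _ = C2b * δ ^ (E / (2*β) + (1/α - 1/(2*β)) * (σ + 1) - 1) := by
            rw [Real.mul_rpow hc.le hδ.le, hMdef, ← Real.rpow_mul hδ.le,
              show δ⁻¹ * (c ^ (E/α) * δ ^ (E/α)) *
                  (3/(2*s)*3^s * δ ^ ((1/α - 1/(2*β)) * (-s)))
                = (c ^ (E/α) * (3/(2*s)*3^s)) *
                  (δ⁻¹ * (δ ^ (E/α) * δ ^ ((1/α - 1/(2*β)) * (-s)))) from by ring,
              ← Real.rpow_add hδ, hpowinv, hC2bdef,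
              show E/α + (1/α - 1/(2*β)) * (-s) - 1
                = E / (2*β) + (1/α - 1/(2*β)) * (σ + 1) - 1 from by rw [hsdef]; ring]
    calc (∑ i ∈ Finset.range K, δ⁻¹ * (muk i) ^ E * (2*(i:ℝ)+n) ^ σ) +
          ∑' i : ℕ, δ⁻¹ * (muk (i+K)) ^ E * (2*((i+K:ℕ):ℝ)+n) ^ σ
        ≤ C2a * δ ^ (E / (2*β) + (1/α - 1/(2*β)) * (σ + 1) - 1) +
          C2b * δ ^ (E / (2*β) + (1/α - 1/(2*β)) * (σ + 1) - 1) := add_le_add hhead htail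
      _ = (C2a + C2b) * δ ^ (E / (2*β) + (1/α - 1/(2*β)) * (σ + 1) - 1) := by ring
      _ ≤ (C1 + (C2a + C2b)) * δ ^ (E / (2*β) + (1/α - 1/(2*β)) * (σ + 1) - 1) := by
          apply mul_le_mul_of_nonneg_right (by linarith) (Real.rpow_nonneg hδ.le _)

/-- Analytic core of the last two cases of Theorem 2.11 (regime `1 < μ^{1/γ} ≤ 2`):
with `μ_k` the unique positive solution of `1 + ((2k+n)λ)^α + λ^(2β) = μ^(1/γ)`,
`E = n(1/p−1/q) + d(1/r−1/r′)`, `σ = φ(1/p−1/2) + φ(1/2−1/q)`, `D = E/α − 1` and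
`C₀ = E/(2β) + (1/α − 1/(2β))(σ+1) − 1`, one has
`Σ_k |1−μ|⁻¹ μ_k^E (2k+n)^σ ≤ C |1−μ|^D` if `|1−μ|^{1/α−1/(2β)} ≤ 1`
and `≤ C |1−μ|^{C₀}` otherwise. -/
theorem series_bound_inhomogeneous_small (n d : ℕ) (hn : 1 ≤ n) (hd : 1 ≤ d)
    (α β γ : ℝ) (hα : 0 < α) (hβ : 0 < β) (hγ : γ ≠ 0)
    (p r : ℝ) (q : ℝ≥0∞)
    (hp1 : 1 ≤ p) (hp2 : p ≤ 2) (hq : 2 ≤ q)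
    (hr1 : 1 ≤ r) (hr2 : r ≤ 2 * (d + 1) / (d + 3))
    (hne : ¬(d = 1 ∧ p = 2 ∧ q = 2)) :
    ∃ C : ℝ, ∀ μ : ℝ, 0 < μ → 1 < μ ^ (1 / γ) → μ ^ (1 / γ) ≤ 2 → ∀ muk : ℕ → ℝ,
      (∀ k : ℕ, 0 < muk k ∧
        1 + ((2 * (k : ℝ) + n) * muk k) ^ α + (muk k) ^ (2 * β) = μ ^ (1 / γ)) →
      (let E : ℝ := n * (1 / p - (q⁻¹).toReal) + d * (1 / r - (1 - 1 / r))
       let σ : ℝ := phiKR n (1 / p - 1 / 2) + phiKR n (1 / 2 - (q⁻¹).toReal)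
       (|1 - μ| ^ (1 / α - 1 / (2 * β)) ≤ 1 →
          ∑' k : ℕ, |1 - μ|⁻¹ * (muk k) ^ E * (2 * (k : ℝ) + n) ^ σ ≤
            C * |1 - μ| ^ (E / α - 1)) ∧
       (1 < |1 - μ| ^ (1 / α - 1 / (2 * β)) →
          ∑' k : ℕ, |1 - μ|⁻¹ * (muk k) ^ E * (2 * (k : ℝ) + n) ^ σ ≤
            C * |1 - μ| ^ (E / (2 * β) + (1 / α - 1 / (2 * β)) * (σ + 1) - 1))) := by
  have hd1 : (1:ℝ) ≤ (d:ℝ) := by exact_mod_cast hd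
  have hp0 : 0 < p := lt_of_lt_of_le zero_lt_one hp1
  have hs1 : (0:ℝ) ≤ 1/p - 1/2 := by
    have : 1/2 ≤ 1/p := one_div_le_one_div_of_le hp0 hp2
    linarith
  have hQ0 : (0:ℝ) ≤ (q⁻¹).toReal := ENNReal.toReal_nonneg
  have hQhalf : (q⁻¹).toReal ≤ 1/2 := by
    have h := ENNReal.inv_le_inv.2 hq
    have h2 := ENNReal.toReal_mono (by simp) h
    simpa using h2
  have hs2 : (0:ℝ) ≤ 1/2 - (q⁻¹).toReal := by linarith
  have hσlb : -(1:ℝ)/3 ≤ phiKR n (1/p - 1/2) + phiKR n (1/2 - (q⁻¹).toReal) := by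
    have := phiKR_ge n hn hs1
    have := phiKR_ge n hn hs2
    linarith
  have hr0 : (0:ℝ) < r := lt_of_lt_of_le zero_lt_one hr1
  have hrle : ((d:ℝ)+3)/(2*((d:ℝ)+1)) ≤ 1/r := by
    have hpos : (0:ℝ) < 2*((d:ℝ)+1)/((d:ℝ)+3) := by positivity
    have := one_div_le_one_div_of_le hr0 hr2
    calc ((d:ℝ)+3)/(2*((d:ℝ)+1)) = 1/(2*((d:ℝ)+1)/((d:ℝ)+3)) := by
          rw [one_div_div]
      _ ≤ 1/r := this
  have hdt : 2*(d:ℝ)/((d:ℝ)+1) ≤ (d:ℝ) * (1/r - (1 - 1/r)) := by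
    have h1 : 2*(((d:ℝ)+3)/(2*((d:ℝ)+1))) - 1 ≤ 1/r - (1 - 1/r) := by linarith
    have h2 : 2*(((d:ℝ)+3)/(2*((d:ℝ)+1))) - 1 = 2/((d:ℝ)+1) := by
      field_simp; ring
    have h3 : 2/((d:ℝ)+1) ≤ 1/r - (1 - 1/r) := by linarith
    calc 2*(d:ℝ)/((d:ℝ)+1) = (d:ℝ) * (2/((d:ℝ)+1)) := by ring
      _ ≤ (d:ℝ) * (1/r - (1 - 1/r)) := by
          apply mul_le_mul_of_nonneg_left h3 (by linarith)
  have hA1 : phiKR n (1/p - 1/2) ≤ (n:ℝ)*(1/p - 1/2) := phiKR_le n hs1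
  have hA2 : phiKR n (1/2 - (q⁻¹).toReal) ≤ (n:ℝ)*(1/2 - (q⁻¹).toReal) := phiKR_le n hs2
  have hEexp : (n:ℝ)*(1/p - (q⁻¹).toReal)
      = (n:ℝ)*(1/p - 1/2) + (n:ℝ)*(1/2 - (q⁻¹).toReal) := by ring
  have hES : (phiKR n (1/p - 1/2) + phiKR n (1/2 - (q⁻¹).toReal)) + 1 <
      (n:ℝ) * (1/p - (q⁻¹).toReal) + (d:ℝ) * (1/r - (1 - 1/r)) := by
    rw [hEexp]
    by_cases hd2 : 2 ≤ d
    · have hd2' : (2:ℝ) ≤ (d:ℝ) := by exact_mod_cast hd2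
      have : (4:ℝ)/3 ≤ 2*(d:ℝ)/((d:ℝ)+1) := by
        rw [div_le_div_iff₀ (by norm_num) (by linarith)]
        linarith
      linarith
    · have hdeq : d = 1 := by omega
      subst hdeq
      have hr2' : r ≤ 1 := by
        have : (2:ℝ) * ((1:ℕ) + 1) / ((1:ℕ) + 3) = 1 := by norm_num
        linarith [hr2, this.le]
      have hreq : r = 1 := le_antisymm hr2' hr1
      have hterm : ((1:ℕ):ℝ) * (1/r - (1 - 1/r)) = 1 := by
        rw [hreq]; norm_num
      rw [hterm]
      rcases (not_and_or.1 (fun h => hne ⟨rfl, h⟩)) with hp | hqne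
      · have hplt : p < 2 := lt_of_le_of_ne hp2 hp
        have hs1' : (0:ℝ) < 1/p - 1/2 := by
          have : 1/2 < 1/p := by
            rw [div_lt_div_iff₀ (by norm_num) hp0]; linarith
          linarith
        have := phiKR_lt n hs1'
        linarith
      · have hqlt : (2:ℝ≥0∞) < q := lt_of_le_of_ne hq (Ne.symm hqne)
        have hinv : q⁻¹ < 2⁻¹ := ENNReal.inv_lt_inv.2 hqlt
        have hnetop : q⁻¹ ≠ ⊤ := by
          simp only [Ne, ENNReal.inv_eq_top]
          intro h; rw [h] at hq; exact (by simp at hq)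
        have hQlt : (q⁻¹).toReal < 1/2 := by
          have := (ENNReal.toReal_lt_toReal hnetop (by simp)).2 hinv
          simpa using this
        have hs2' : (0:ℝ) < 1/2 - (q⁻¹).toReal := by linarith
        have := phiKR_lt n hs2'
        linarith
  exact master n hn α β γ hα hβ hγ _ _ hσlb hES
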